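/- Let S be a numerical semigroup with multiplicity m, conductor c, q = ⌈c/m⌉, ρ = qm - c, and for j ≥ 0 let I_j = [jm - ρ, (j+1)m - ρ - 1] ∩ ℤ, X = Ap(S,m) = {s ∈ S : s - m ∉ S}, and X_j = X ∩ I_j. Then |L| = Σ_{i=0}^{q-1} (q - i)·|X_i|, where L = S ∩ [0, c-1]. -/

import Mathlib

open Set Pointwise

/-- `S` is a numerical semigroup: a cofinite submonoid of `ℕ` containing `0`. -/
def IsNumSgp (S : Set ℕ) : Prop :=
  0 ∈ S ∧ (∀ a ∈ S, ∀ b ∈ S, a + b ∈ S) ∧ Sᶜ.Finite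

/-- multiplicity `m = min (S \ {0})`. -/
noncomputable def NSmult (S : Set ℕ) : ℕ := sInf (S \ {0})

/-- NSconductor: least `c` with `c + ℕ ⊆ S`. -/
noncomputable def NSconductor (S : Set ℕ) : ℕ := sInf {n | ∀ k, n ≤ k → k ∈ S}

/-- primitive elements: nonzero elements not a sum of two nonzero elements of `S`. -/
noncomputable def NSprims (S : Set ℕ) : Set ℕ :=
  {a | a ∈ S ∧ a ≠ 0 ∧ ¬ ∃ x, x ∈ S ∧ x ≠ 0 ∧ ∃ y, y ∈ S ∧ y ≠ 0 ∧ a = x + y}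

/-- `L = S ∩ [0, c-1]`. -/
noncomputable def NSLset (S : Set ℕ) : Set ℕ := S ∩ Set.Iio (NSconductor S)

/-- `q = ⌈c / m⌉`. -/
noncomputable def NSqnum (S : Set ℕ) : ℕ := (NSconductor S + NSmult S - 1) / NSmult S

/-- `ρ = q * m - c`. -/
noncomputable def NSrho (S : Set ℕ) : ℕ := NSqnum S * NSmult S - NSconductor S

/-- `D_q = [c, c+m-1] \ P`, the non-primitive elements of `S` in `[c, c+m-1]`. -/
noncomputable def NSDq (S : Set ℕ) : Set ℕ :=
  Set.Icc (NSconductor S) (NSconductor S + NSmult S - 1) \ NSprims S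

/-- `W(S) = |P| |L| - c`. -/
noncomputable def NSWnum (S : Set ℕ) : ℤ :=
  (NSprims S).ncard * (NSLset S).ncard - NSconductor S

/-- `W₀(S) = |P ∩ L| |L| - q |D_q| + ρ`. -/
noncomputable def NSW0num (S : Set ℕ) : ℤ :=
  (NSprims S ∩ NSLset S).ncard * (NSLset S).ncard - NSqnum S * (NSDq S).ncard + NSrho S

/-- `⟨T⟩_t`: the submonoid generated by `T` together with all integers `≥ t`. -/
noncomputable def NSgenUpTo (T : Set ℕ) (t : ℕ) : Set ℕ :=
  (AddSubmonoid.closure T : Set ℕ) ∪ {n | t ≤ n}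

/-- Apéry set of `S` with respect to `m`: elements `s ∈ S` with `s - m ∉ S`. -/
noncomputable def NSapery (S : Set ℕ) : Set ℕ :=
  {s | s ∈ S ∧ ∀ t, s = t + NSmult S → t ∉ S}

/-- the interval `I_j = [jm - ρ, (j+1)m - ρ - 1]` (intersected with `ℕ`). -/
noncomputable def NSIint (S : Set ℕ) (j : ℕ) : Set ℕ :=
  Set.Icc (j * NSmult S - NSrho S) ((j + 1) * NSmult S - NSrho S - 1)

/-- `X_j = Ap(S,m) ∩ I_j`. -/
noncomputable def NSXj (S : Set ℕ) (j : ℕ) : Set ℕ := NSapery S ∩ NSIint S j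

/-- decomposable elements `D = (S \ {0}) + (S \ {0})`. -/
noncomputable def NSdecomp (S : Set ℕ) : Set ℕ :=
  {s | ∃ x, x ∈ S ∧ x ≠ 0 ∧ ∃ y, y ∈ S ∧ y ≠ 0 ∧ s = x + y}

/-- `h`-fold sumset `hA = A + ⋯ + A`. -/
def hfold {G : Type*} [AddCommMonoid G] : ℕ → Set G → Set G
  | 0, _ => {0}
  | n + 1, A => A + hfold n A

/-- `A` is a `B_h` set: `|hA| = C(|A| + h - 1, h)`. -/
def IsBh {G : Type*} [AddCommMonoid G] (h : ℕ) (A : Set G) : Prop :=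
  (hfold h A).ncard = (A.ncard + h - 1).choose h

namespace Stmt5Aux

lemma mult_spec (S : Set ℕ) (hS : IsNumSgp S) : NSmult S ∈ S ∧ NSmult S ≠ 0 := by
  have hinf : S.Infinite := by
    have := hS.2.2.infinite_compl
    rwa [compl_compl] at this
  have hne : (S \ {0}).Nonempty := (hinf.diff (Set.finite_singleton 0)).nonempty
  have h := Nat.sInf_mem hne
  exact ⟨h.1, h.2⟩

lemma add_mul_mem (S : Set ℕ) (hS : IsNumSgp S) {x : ℕ} (hx : x ∈ S) (k : ℕ) :
    x + k * NSmult S ∈ S := by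
  induction k with
  | zero => simpa using hx
  | succ n ih =>
      have h := hS.2.1 _ ih _ (mult_spec S hS).1
      have e : x + (n + 1) * NSmult S = x + n * NSmult S + NSmult S := by ring
      rw [e]; exact h

lemma apery_decomp (S : Set ℕ) (hS : IsNumSgp S) :
    ∀ s, s ∈ S → ∃ x k, x ∈ NSapery S ∧ s = x + k * NSmult S := by
  intro s
  induction s using Nat.strong_induction_on with
  | _ s ih =>
    intro hs
    by_cases hx : ∀ t, s = t + NSmult S → t ∉ S
    · exact ⟨s, 0, ⟨hs, hx⟩, by simp⟩
    · push_neg at hx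
      obtain ⟨t, ht, htS⟩ := hx
      have hm := (mult_spec S hS).2
      obtain ⟨x, k, hxX, hxk⟩ := ih t (by omega) htS
      exact ⟨x, k + 1, hxX, by rw [ht, hxk]; ring⟩

lemma apery_inj (S : Set ℕ) (hS : IsNumSgp S) {x x' k k' : ℕ}
    (hx : x ∈ NSapery S) (hx' : x' ∈ NSapery S)
    (h : x + k * NSmult S = x' + k' * NSmult S) : x = x' ∧ k = k' := by
  have key : ∀ a a' b b' : ℕ, a ∈ NSapery S → a' ∈ NSapery S →
      a + b * NSmult S = a' + b' * NSmult S → ¬ b < b' := by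
    intro a a' b b' ha ha' hab hlt
    have hb' : b' = b + ((b' - b - 1) + 1) := by omega
    rw [hb'] at hab
    have hab2 : a = a' + (b' - b - 1) * NSmult S + NSmult S := by
      have e : a + b * NSmult S
          = a' + (b' - b - 1) * NSmult S + NSmult S + b * NSmult S := by
        rw [hab]; ring
      exact Nat.add_right_cancel e
    exact ha.2 _ hab2 (add_mul_mem S hS ha'.1 _)
  have h1 := key _ _ _ _ hx hx' h
  have h2 := key _ _ _ _ hx' hx h.symm
  have hkk : k = k' := by omega
  subst hkk
  exact ⟨Nat.add_right_cancel h, rfl⟩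

end Stmt5Aux

theorem stmt5 (S : Set ℕ) (hS : IsNumSgp S) :
    (NSLset S).ncard = ∑ i ∈ Finset.range (NSqnum S), (NSqnum S - i) * (NSXj S i).ncard := by
  classical
  have hm0 : 0 < NSmult S := Nat.pos_of_ne_zero (Stmt5Aux.mult_spec S hS).2
  by_cases hc0 : NSconductor S = 0
  · have hq0 : NSqnum S = 0 := by
      unfold NSqnum
      exact Nat.div_eq_of_lt (by omega)
    have hL : NSLset S = ∅ := by
      unfold NSLset
      rw [hc0]
      ext n
      simp
    rw [hq0, hL, Finset.range_zero, Finset.sum_empty, Set.ncard_empty]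
  -- main case
  have hc1 : 1 ≤ NSconductor S := by omega
  have harith : NSconductor S ≤ NSqnum S * NSmult S ∧
      NSqnum S * NSmult S ≤ NSconductor S + NSmult S - 1 := by
    have h1 := Nat.div_add_mod (NSconductor S + NSmult S - 1) (NSmult S)
    have h2 := Nat.mod_lt (NSconductor S + NSmult S - 1) hm0
    have h3 : NSqnum S * NSmult S
        = NSmult S * ((NSconductor S + NSmult S - 1) / NSmult S) := by
      unfold NSqnum; ring
    omega
  have hrho : NSrho S = NSqnum S * NSmult S - NSconductor S := rfl
  have hQ : NSqnum S * NSmult S = NSconductor S + NSrho S := by omega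
  have hrm : NSrho S < NSmult S := by omega
  -- interval characterization
  have hI : ∀ x j : ℕ, x ∈ NSIint S j ↔ (x + NSrho S) / NSmult S = j := by
    intro x j
    unfold NSIint
    rw [Set.mem_Icc]
    have hA2 : j * NSmult S = 0 ∨ NSmult S ≤ j * NSmult S := by
      rcases Nat.eq_zero_or_pos j with hj | hj
      · left; rw [hj]; ring
      · right; exact Nat.le_mul_of_pos_left _ hj
    have hAB : (j + 1) * NSmult S = j * NSmult S + NSmult S := by ring
    constructor
    · rintro ⟨hl, hr⟩
      exact Nat.div_eq_of_lt_le (by omega) (by omega)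
    · intro h
      have hb1 : j * NSmult S ≤ x + NSrho S := by
        rw [← h]; exact Nat.div_mul_le_self _ _
      have hb2 : x + NSrho S < (j + 1) * NSmult S := by
        rw [← Nat.div_lt_iff_lt_mul hm0]; omega
      omega
  -- index shift
  have hshift : ∀ x k : ℕ,
      (x + k * NSmult S + NSrho S) / NSmult S = (x + NSrho S) / NSmult S + k := by
    intro x k
    rw [show x + k * NSmult S + NSrho S = x + NSrho S + k * NSmult S from by ring]
    exact Nat.add_mul_div_right _ _ hm0
  -- finiteness
  have hXfin : ∀ i, (NSXj S i).Finite := fun i =>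
    Set.Finite.subset (Set.finite_Icc (i * NSmult S - NSrho S)
      ((i + 1) * NSmult S - NSrho S - 1)) (fun x hx => hx.2)
  -- the Finset of pairs
  set T : Finset (ℕ × ℕ) := (Finset.range (NSqnum S)).biUnion
    (fun i => (hXfin i).toFinset ×ˢ Finset.range (NSqnum S - i)) with hT
  have hTmem : ∀ p : ℕ × ℕ,
      p ∈ T ↔ p.1 ∈ NSapery S ∧ p.1 + p.2 * NSmult S < NSconductor S := by
    intro p
    rw [hT]
    simp only [Finset.mem_biUnion, Finset.mem_range, Finset.mem_product,
      Set.Finite.mem_toFinset]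
    constructor
    · rintro ⟨i, hi, ⟨⟨hpX, hpI⟩, hpk⟩⟩
      refine ⟨hpX, ?_⟩
      have hidx : (p.1 + NSrho S) / NSmult S = i := (hI _ _).1 hpI
      have h2 : (p.1 + p.2 * NSmult S + NSrho S) / NSmult S = i + p.2 := by
        rw [hshift, hidx]
      have h3 : p.1 + p.2 * NSmult S + NSrho S < NSqnum S * NSmult S := by
        rw [← Nat.div_lt_iff_lt_mul hm0]; omega
      omega
    · rintro ⟨hpX, hpc⟩
      have h2 : (p.1 + p.2 * NSmult S + NSrho S) / NSmult S
          = (p.1 + NSrho S) / NSmult S + p.2 := hshift _ _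
      have h3 : (p.1 + p.2 * NSmult S + NSrho S) / NSmult S < NSqnum S := by
        rw [Nat.div_lt_iff_lt_mul hm0]; omega
      exact ⟨(p.1 + NSrho S) / NSmult S, by omega,
        ⟨⟨hpX, (hI _ _).2 rfl⟩, by omega⟩⟩
  -- the bijection
  have himg : (fun p : ℕ × ℕ => p.1 + p.2 * NSmult S) '' ↑T = NSLset S := by
    ext s
    simp only [Set.mem_image, Finset.mem_coe]
    constructor
    · rintro ⟨p, hp, rfl⟩
      rw [hTmem] at hp
      exact ⟨Stmt5Aux.add_mul_mem S hS hp.1.1 _, hp.2⟩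
    · rintro ⟨hsS, hsc⟩
      obtain ⟨x, k, hxX, rfl⟩ := Stmt5Aux.apery_decomp S hS s hsS
      exact ⟨(x, k), (hTmem _).2 ⟨hxX, hsc⟩, rfl⟩
  have hinj : Set.InjOn (fun p : ℕ × ℕ => p.1 + p.2 * NSmult S) ↑T := by
    intro p hp p' hp' hpp
    rw [Finset.mem_coe, hTmem] at hp hp'
    obtain ⟨h1, h2⟩ := Stmt5Aux.apery_inj S hS hp.1 hp'.1 hpp
    exact Prod.ext h1 h2
  rw [← himg, Set.ncard_image_of_injOn hinj, Set.ncard_coe_finset, hT,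
    Finset.card_biUnion]
  · apply Finset.sum_congr rfl
    intro i _
    rw [Finset.card_product, Finset.card_range,
      Set.ncard_eq_toFinset_card _ (hXfin i), Nat.mul_comm]
  · intro i _ j _ hij
    rw [Function.onFun, Finset.disjoint_left]
    rintro p hpi hpj
    rw [Finset.mem_product, Set.Finite.mem_toFinset] at hpi hpj
    have h1 : (p.1 + NSrho S) / NSmult S = i := (hI _ _).1 hpi.1.2
    have h2 : (p.1 + NSrho S) / NSmult S = j := (hI _ _).1 hpj.1.2
    exact hij (by omega)
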